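/- Let $x_1,\dots,x_m$ span $\mathbb{R}^n$ and let $u \geq 0$ sum to 1 with $M(u) \succ 0$. Suppose $u$ is a $\delta$-primal feasible solution for the D-optimal design problem, i.e., $x_j^T M(u)^{-1} x_j \leq n(1+\delta)$ for all $j$. Then $u$ is an $(n + n\delta - 1)$-primal feasible solution for the A-optimal design problem, i.e., $x_j^T M(u)^{-2} x_j \leq (n + n\delta)\operatorname{Trace}(M(u)^{-1})$ for all $j$. -/

import Mathlib

open Matrix

lemma aux_dp {n : ℕ} (A B : Matrix (Fin n) (Fin n) ℝ) (v w : Fin n → ℝ) :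
    (A *ᵥ v) ⬝ᵥ (B *ᵥ w) = v ⬝ᵥ (Aᵀ * B) *ᵥ w := by
  rw [← mulVec_mulVec, dotProduct_mulVec v Aᵀ, vecMul_transpose]

-- Rayleigh ≤ trace for PSD matrices
lemma aux_quad_le_trace {n : ℕ} {A : Matrix (Fin n) (Fin n) ℝ} (hA : A.PosSemidef)
    (v : Fin n → ℝ) : v ⬝ᵥ A *ᵥ v ≤ A.trace * (v ⬝ᵥ v) := by
  obtain ⟨B, rfl⟩ : ∃ B : Matrix (Fin n) (Fin n) ℝ, A = Bᴴ * B := by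
    open scoped MatrixOrder in exact CStarAlgebra.nonneg_iff_eq_star_mul_self.mp hA.nonneg
  rw [conjTranspose_eq_transpose_of_trivial] at *
  rw [← aux_dp]
  have h2 : (Bᵀ * B).trace = ∑ i, ∑ j, B i j ^ 2 := by
    rw [Matrix.trace, Finset.sum_comm]
    simp [Matrix.diag, Matrix.mul_apply, sq]
  rw [h2, Finset.sum_mul]
  unfold dotProduct
  apply Finset.sum_le_sum
  intro i _
  calc (B *ᵥ v) i * (B *ᵥ v) i = (∑ j, B i j * v j) ^ 2 := by rw [sq]; rfl
    _ ≤ (∑ j, B i j ^ 2) * ∑ j, v j ^ 2 :=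
        Finset.sum_mul_sq_le_sq_mul_sq Finset.univ (fun j => B i j) v
    _ = (∑ j, B i j ^ 2) * ∑ j, v j * v j := by simp [sq]

theorem stmt14 {n m : ℕ} (x : Fin m → Fin n → ℝ)
    (hspan : Submodule.span ℝ (Set.range x) = ⊤)
    (u : Fin m → ℝ) (hu : ∀ i, 0 ≤ u i) (hsum : ∑ i, u i = 1)
    (M : Matrix (Fin n) (Fin n) ℝ) (hM : M = ∑ i, u i • vecMulVec (x i) (x i))
    (hMpd : M.PosDef) (δ : ℝ)
    (hD : ∀ j, x j ⬝ᵥ M⁻¹ *ᵥ x j ≤ (n : ℝ) * (1 + δ)) :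
    ∀ j, x j ⬝ᵥ (M⁻¹ * M⁻¹) *ᵥ x j ≤ ((n : ℝ) + (n : ℝ) * δ) * (M⁻¹).trace := by
  intro j
  have hinv : (M⁻¹).PosDef := hMpd.inv
  have hpsd := hinv.posSemidef
  set S := (open scoped MatrixOrder in CFC.sqrt (M⁻¹)) with hS
  have hSS : S * S = M⁻¹ := by
    open scoped MatrixOrder in exact CFC.sqrt_mul_sqrt_self (M⁻¹) hpsd.nonneg
  have hSsym : Sᵀ = S := by
    have := (open scoped MatrixOrder in (CFC.sqrt_nonneg (M⁻¹)).posSemidef.1)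
    rwa [IsHermitian, conjTranspose_eq_transpose_of_trivial] at this
  set y := S *ᵥ x j with hy
  have e1 : y ⬝ᵥ M⁻¹ *ᵥ y = x j ⬝ᵥ (M⁻¹ * M⁻¹) *ᵥ x j := by
    rw [hy, mulVec_mulVec, aux_dp, hSsym, ← hSS]
    simp only [Matrix.mul_assoc]
  have e2 : y ⬝ᵥ y = x j ⬝ᵥ M⁻¹ *ᵥ x j := by
    rw [hy, aux_dp, hSsym, hSS]
  have key := aux_quad_le_trace hpsd y
  have htr : 0 ≤ (M⁻¹).trace := by
    rw [Matrix.trace]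
    apply Finset.sum_nonneg
    intro i _
    have := hpsd.dotProduct_mulVec_nonneg (Pi.single i 1)
    simpa [mulVec_single, single_dotProduct] using this
  calc x j ⬝ᵥ (M⁻¹ * M⁻¹) *ᵥ x j = y ⬝ᵥ M⁻¹ *ᵥ y := e1.symm
    _ ≤ (M⁻¹).trace * (y ⬝ᵥ y) := key
    _ = (M⁻¹).trace * (x j ⬝ᵥ M⁻¹ *ᵥ x j) := by rw [e2]
    _ ≤ (M⁻¹).trace * ((n : ℝ) * (1 + δ)) := mul_le_mul_of_nonneg_left (hD j) htr
    _ = ((n : ℝ) + (n : ℝ) * δ) * (M⁻¹).trace := by ring
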